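/- arXiv:1909.13195 — 2 statements merged into one kernel-verified Lean document; each statement's English description precedes it below -/
import Mathlib

section
/- Let Z be a nonempty finite subset of V, let Z' ⊇ Z be a subset with V∖Z' finite, let a ∈ V, and let r ≥ 0. Then the number of ρ ∈ SF(Z') with ρ ∈ E_{r,Z}(a,Z') is at most the number of ρ ∈ SF(Z') with ρ ∈ D_r; equivalently, if ρ is sampled from the uniform measure OUSF(Z') on SF(Z'), then P[ρ ∈ E_{r,Z}(a,Z')] ≤ P[ρ ∈ D_r]. -/
open Classical

universe u

variable {V : Type u}

/-- A rotor mechanism: for each vertex `x`, `τ x` restricts to a bijection of the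
neighbor set of `x` having a single orbit. -/
def IsMechanism (G : SimpleGraph V) (τ : V → V → V) : Prop :=
  ∀ x : V, Set.BijOn (τ x) (G.neighborSet x) (G.neighborSet x) ∧
    ∀ y ∈ G.neighborSet x, ∀ z ∈ G.neighborSet x, ∃ i : ℕ, (τ x)^[i] y = z

/-- One step of the rotor walk with sink `Z`; the walk freezes once it reaches `Z`. -/
noncomputable def rotorStep [DecidableEq V] (τ : V → V → V) (Z : Set V) :
    V × (V → V) → V × (V → V) := fun p =>
  if p.1 ∈ Z then p
  else (τ p.1 (p.2 p.1), Function.update p.2 p.1 (τ p.1 (p.2 p.1)))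

/-- The rotor walk with initial location `a`, sink `Z` and initial rotor
configuration `ρ`: position (first component) and rotor configuration
(second component) at time `t`. -/
noncomputable def rotorWalk [DecidableEq V] (τ : V → V → V) (Z : Set V)
    (a : V) (ρ : V → V) (t : ℕ) : V × (V → V) :=
  (rotorStep τ Z)^[t] (a, ρ)

/-- `Z`-oriented spanning forests of `G`, viewed as rotor configurations,
normalized to be the identity on `Z` (the values on `Z` are inconsequential). -/
def SFset (G : SimpleGraph V) (Z : Set V) : Set (V → V) :=
  {ρ | (∀ x ∉ Z, G.Adj x (ρ x)) ∧ (∀ x : V, ∃ ℓ : ℕ, ρ^[ℓ] x ∈ Z) ∧ ∀ x ∈ Z, ρ x = x}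

/-- The eventual value of an eventually-constant sequence. -/
noncomputable def eventualVal (f : ℕ → V) : V :=
  if h : ∃ t : ℕ, ∀ s : ℕ, t ≤ s → f s = f t then f h.choose else f 0

/-- The final rotor configuration `σ(a, Z; ρ)` of the rotor walk. -/
noncomputable def finalConfig [DecidableEq V] (τ : V → V → V) (Z : Set V)
    (a : V) (ρ : V → V) : V → V :=
  fun x => eventualVal fun t => (rotorWalk τ Z a ρ t).2 x

/-- `ξ_i(a_0, …, a_{i-1}, Z; ρ)`: the rotor configuration after `i` successive
walkers, started at `a_0, …, a_{i-1}`, have performed rotor walks with sink `Z`. -/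
noncomputable def xiConfig [DecidableEq V] (τ : V → V → V) (Z : Set V) (av : ℕ → V) :
    ℕ → (V → V) → (V → V)
  | 0, ρ => ρ
  | i + 1, ρ => finalConfig τ Z (av i) (xiConfig τ Z av i ρ)

/-- The set of times at which the rotor walk (run until it first reaches the
sink `Z`) is at a vertex of `W`; its cardinality is the odometer `u(a,Z;ρ)(W)`. -/
def visitTimes [DecidableEq V] (τ : V → V → V) (Z : Set V) (a : V) (ρ : V → V)
    (W : Set V) : Set ℕ :=
  {t | (rotorWalk τ Z a ρ t).1 ∈ W ∧ ∀ s < t, (rotorWalk τ Z a ρ s).1 ∉ Z}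

/-- The event `E_{r,W}(a,Z)`: the rotor walk with initial location `a` and sink `Z`
visits `W` some time after visiting a vertex at graph distance at least `r` from `W`. -/
def Eset [DecidableEq V] (G : SimpleGraph V) (τ : V → V → V) (r : ℕ) (W : Set V)
    (a : V) (Z : Set V) : Set (V → V) :=
  {ρ | ∃ t₁ t₂ : ℕ, t₁ < t₂ ∧ (∀ s < t₂, (rotorWalk τ Z a ρ s).1 ∉ Z) ∧
    (∀ w ∈ W, r ≤ G.dist w (rotorWalk τ Z a ρ t₁).1) ∧ (rotorWalk τ Z a ρ t₂).1 ∈ W}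

/-- The event `D_r` (relative to the set `Z`): there is an oriented path in `ρ`
from a vertex at graph distance exactly `r` from `Z` to a vertex of `Z`. -/
def Dset (G : SimpleGraph V) (Z : Set V) (r : ℕ) : Set (V → V) :=
  {ρ | ∃ x : V, ∃ ℓ : ℕ, (∀ w ∈ Z, r ≤ G.dist w x) ∧ (∃ w ∈ Z, G.dist w x = r) ∧
    ρ^[ℓ] x ∈ Z}

/-- The transition matrix `P_Z` of simple random walk on `G` killed upon hitting `Z`. -/
noncomputable def killedP (G : SimpleGraph V) [∀ v : V, Fintype (G.neighborSet v)]
    (Z : Set V) : Matrix {x : V // x ∉ Z} {x : V // x ∉ Z} ℝ :=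
  fun x y => if G.Adj x.1 y.1 then (1 : ℝ) / (G.degree x.1) else 0

/-- The Green function `((I - P_Z)⁻¹)_{a,x}` of simple random walk killed at `Z`,
as a function of a pair of vertices (zero if `V ∖ Z` is infinite or `a ∈ Z` or `x ∈ Z`). -/
noncomputable def greenFn (G : SimpleGraph V) [DecidableEq V]
    [∀ v : V, Fintype (G.neighborSet v)] (Z : Set V) (a x : V) : ℝ :=
  if h : ({y : V | y ∉ Z}).Finite ∧ a ∉ Z ∧ x ∉ Z then
    letI : Fintype {y : V // y ∉ Z} := h.1.fintype
    ((1 - killedP G Z)⁻¹) ⟨a, h.2.1⟩ ⟨x, h.2.2⟩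
  else 0

section AuxRotor

lemma exists_minimal' {P : ℕ → Prop} (h : ∃ n, P n) :
    ∃ n, P n ∧ ∀ j < n, ¬ P j := by
  classical
  exact ⟨Nat.find h, Nat.find_spec h, fun j hj => Nat.find_min h hj⟩

lemma iter_agree' {α : Type*} {c c' : α → α} {x : α} (h : ∀ v, v ≠ x → c' v = c v) :
    ∀ (n : ℕ) (v : α), (∀ j, j < n → c^[j] v ≠ x) → c'^[n] v = c^[n] v := by
  intro n
  induction n with
  | zero => intro v _; rfl
  | succ n ih =>
    intro v hv
    rw [Function.iterate_succ_apply', Function.iterate_succ_apply',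
      ih v (fun j hj => hv j (by omega)), h _ (hv n (by omega))]

lemma iterate_mod' {α : Type*} {f : α → α} {v : α} {d : ℕ} (hd : 0 < d) (hfix : f^[d] v = v)
    (m : ℕ) : f^[m] v = f^[m % d] v := by
  conv_lhs => rw [← Nat.mod_add_div m d]
  rw [Function.iterate_add_apply, Function.iterate_mul, Function.iterate_fixed hfix]

lemma min_endpoint' {α : Type*} {c : α → α} {w x : α} {S : Set α} (hx : x ∉ S)
    (h : ∃ k, c^[k] w = x ∧ ∀ j < k, c^[j] w ∉ S) :
    ∃ k, c^[k] w = x ∧ ∀ j < k, c^[j] w ∉ S ∪ {x} := by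
  obtain ⟨k, hk, havoid⟩ := h
  obtain ⟨k₀, hk₀, hmin⟩ := exists_minimal' (P := fun n => c^[n] w ∈ S ∪ {x})
    ⟨k, Or.inr (by simp [hk])⟩
  have hk₀le : k₀ ≤ k := by
    by_contra hlt
    exact hmin k (by omega) (Or.inr (by simp [hk]))
  rcases hk₀ with hS | hX
  · rcases lt_or_eq_of_le hk₀le with hlt | heq
    · exact absurd hS (havoid k₀ hlt)
    · rw [heq, hk] at hS; exact absurd hS hx
  · exact ⟨k₀, by simpa using hX, hmin⟩

end AuxRotor

section RotorLemmas

variable {V : Type u} [DecidableEq V] {G : SimpleGraph V} {τ : V → V → V} {Z' : Set V}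

/-- The invariant maintained along a rotor walk: the configuration is the identity on the
sink, rotors point to neighbors, every rotor path reaches the sink or the current position,
and there is a rotor path from the base point `w` to the current position avoiding the sink. -/
def GoodSt (G : SimpleGraph V) (Z' : Set V) (w : V) (p : V × (V → V)) : Prop :=
  (∀ x ∈ Z', p.2 x = x) ∧ (∀ x ∉ Z', G.Adj x (p.2 x)) ∧
    (∀ v, ∃ ℓ, p.2^[ℓ] v ∈ Z' ∪ {p.1}) ∧
    (∃ k, p.2^[k] w = p.1 ∧ ∀ j < k, p.2^[j] w ∉ Z')

lemma rotorStep_of_notMem {p : V × (V → V)} (hp : p.1 ∉ Z') :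
    rotorStep τ Z' p = (τ p.1 (p.2 p.1), Function.update p.2 p.1 (τ p.1 (p.2 p.1))) := by
  rw [rotorStep, if_neg hp]

lemma good_step (hτ : IsMechanism G τ) {w : V} {p : V × (V → V)}
    (hg : GoodSt G Z' w p) (hp : p.1 ∉ Z') : GoodSt G Z' w (rotorStep τ Z' p) := by
  obtain ⟨x, c⟩ := p
  simp only at hp
  obtain ⟨hid, hadj, hI1, hI2⟩ := hg
  simp only at hid hadj hI1 hI2
  have hcx : c x ∈ G.neighborSet x := (SimpleGraph.mem_neighborSet _ _ _).mpr (hadj x hp)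
  have hy : τ x (c x) ∈ G.neighborSet x := (hτ x).1.mapsTo hcx
  rw [rotorStep_of_notMem hp]
  simp only [GoodSt]
  set y := τ x (c x) with hydef
  have hupd : ∀ v, v ≠ x → Function.update c x y v = c v :=
    fun v hv => Function.update_of_ne hv _ _
  refine ⟨?_, ?_, ?_, ?_⟩
  · intro z hz
    have hzx : z ≠ x := fun h => hp (h ▸ hz)
    simpa [Function.update_of_ne hzx] using hid z hz
  · intro v hv
    by_cases hvx : v = x
    · subst hvx
      simpa [Function.update_self] using (SimpleGraph.mem_neighborSet _ _ _).mp hy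
    · simpa [Function.update_of_ne hvx] using hadj v hv
  · intro v
    obtain ⟨ℓ, hℓ, hminℓ⟩ := exists_minimal' (P := fun n => c^[n] v ∈ Z' ∪ {x}) (hI1 v)
    have hagree : ∀ j ≤ ℓ, (Function.update c x y)^[j] v = c^[j] v := by
      intro j hj
      refine iter_agree' hupd j v (fun i hi hix => ?_)
      exact hminℓ i (by omega) (Or.inr hix)
    rcases hℓ with hZ | hX
    · exact ⟨ℓ, by rw [hagree ℓ le_rfl]; exact Or.inl hZ⟩
    · refine ⟨ℓ + 1, ?_⟩
      rw [Function.iterate_succ_apply', hagree ℓ le_rfl]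
      have : c^[ℓ] v = x := hX
      rw [this, Function.update_self]
      exact Or.inr rfl
  · obtain ⟨k, hk, hkmin⟩ := min_endpoint' (S := Z') hp hI2
    have hagree : ∀ j ≤ k, (Function.update c x y)^[j] w = c^[j] w := by
      intro j hj
      refine iter_agree' hupd j w (fun i hi hix => ?_)
      exact hkmin i (by omega) (Or.inr hix)
    refine ⟨k + 1, ?_, ?_⟩
    · rw [Function.iterate_succ_apply', hagree k le_rfl, hk, Function.update_self]
    · intro j hj
      rcases Nat.lt_succ_iff_lt_or_eq.mp hj with h | h
      · rw [hagree j (le_of_lt h)]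
        exact fun hm => hkmin j h (Or.inl hm)
      · subst h
        rw [hagree j le_rfl, hk]
        exact hp

lemma good_iter (hτ : IsMechanism G τ) {w : V} {p : V × (V → V)} (hg : GoodSt G Z' w p) :
    ∀ n : ℕ, (∀ m < n, ((rotorStep τ Z')^[m] p).1 ∉ Z') →
      GoodSt G Z' w ((rotorStep τ Z')^[n] p) := by
  intro n
  induction n with
  | zero => intro _; exact hg
  | succ n ih =>
    intro h
    rw [Function.iterate_succ_apply']
    exact good_step hτ (ih fun m hm => h m (by omega)) (h n (by omega))

lemma reverse_core {σ c₁ : V → V} {x₁ x₂ y aa : V} {k₁ k₂ : ℕ}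
    (h₂ : x₂ ∉ Z') (hne : x₁ ≠ x₂)
    (hσ₁ : σ x₁ = y) (hσ₂ : σ x₂ = y)
    (hc₁ : ∀ v, v ≠ x₁ → c₁ v = σ v)
    (hI1₁ : ∀ v, ∃ ℓ, c₁^[ℓ] v ∈ Z' ∪ {x₁})
    (hp₁ : σ^[k₁] aa = x₁)
    (hp₂ : σ^[k₂] aa = x₂) (havoid₂ : ∀ j < k₂, σ^[j] aa ∉ Z')
    (hlt : k₁ < k₂) : False := by
  set d := k₂ - k₁ with hddef
  have hd : 0 < d := by omega
  have hyk₁ : σ^[k₁ + 1] aa = y := by rw [Function.iterate_succ_apply', hp₁, hσ₁]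
  have hyk₂ : σ^[k₂ + 1] aa = y := by rw [Function.iterate_succ_apply', hp₂, hσ₂]
  have horb : ∀ m, σ^[m] y = σ^[m + (k₁ + 1)] aa := by
    intro m; rw [Function.iterate_add_apply, hyk₁]
  have hfix : σ^[d] y = y := by
    rw [horb]
    have h : d + (k₁ + 1) = k₂ + 1 := by omega
    rw [h, hyk₂]
  have horbZ : ∀ m, σ^[m] y ∉ Z' := by
    intro m
    rw [iterate_mod' hd hfix m, horb]
    have hle : m % d + (k₁ + 1) ≤ k₂ := by
      have := Nat.mod_lt m hd; omega
    rcases lt_or_eq_of_le hle with h | h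
    · exact havoid₂ _ h
    · rw [h, hp₂]; exact h₂
  by_cases hx : ∃ m, σ^[m] y = x₁
  · obtain ⟨m, hm⟩ := hx
    have hfix' : σ^[m + 1] y = y := by rw [Function.iterate_succ_apply', hm, hσ₁]
    obtain ⟨cc, ⟨hccpos, hccfix⟩, hccmin⟩ :=
      exists_minimal' (P := fun i => 0 < i ∧ σ^[i] y = y) ⟨m + 1, Nat.succ_pos m, hfix'⟩
    have hdiv : ∀ i, 0 < i → σ^[i] y = y → σ^[i - 1] y = σ^[cc - 1] y := by
      intro i hi hfi
      have hmod : i % cc = 0 := by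
        by_contra hs
        have h1 : σ^[i % cc] y = y := by rw [← iterate_mod' hccpos hccfix i, hfi]
        exact hccmin (i % cc) (Nat.mod_lt i hccpos) ⟨Nat.pos_of_ne_zero hs, h1⟩
      have hdm := Nat.div_add_mod i cc
      set q := i / cc with hqdef
      have hq : i = cc * q := by omega
      have hqpos : 0 < q := by
        rcases Nat.eq_zero_or_pos q with h0 | h
        · rw [h0, Nat.mul_zero] at hq; omega
        · exact h
      have hcc' : cc * q = cc * (q - 1) + cc := by
        conv_lhs => rw [show q = (q - 1) + 1 by omega]
        ring
      have hsplit : i - 1 = (cc - 1) + cc * (q - 1) := by omega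
      rw [hsplit, Function.iterate_add_apply, Function.iterate_mul,
        Function.iterate_fixed hccfix]
    have hx₁ : x₁ = σ^[cc - 1] y := by
      have h := hdiv (m + 1) (Nat.succ_pos m) hfix'
      simpa [hm] using h
    have hx₂ : x₂ = σ^[cc - 1] y := by
      rw [← hdiv d hd hfix, horb]
      have h : d - 1 + (k₁ + 1) = k₂ := by omega
      rw [h, hp₂]
    exact hne (hx₁.trans hx₂.symm)
  · push_neg at hx
    obtain ⟨ℓ, hℓ⟩ := hI1₁ y
    rw [iter_agree' hc₁ ℓ y (fun j _ => hx j)] at hℓ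
    rcases hℓ with h | h
    · exact horbZ ℓ h
    · exact hx ℓ h

lemma reverse_pos_eq {σ c₁ c₂ : V → V} {x₁ x₂ y aa : V}
    (h₁ : x₁ ∉ Z') (h₂ : x₂ ∉ Z') (hσ₁ : σ x₁ = y) (hσ₂ : σ x₂ = y)
    (hc₁ : ∀ v, v ≠ x₁ → c₁ v = σ v) (hc₂ : ∀ v, v ≠ x₂ → c₂ v = σ v)
    (hI1₁ : ∀ v, ∃ ℓ, c₁^[ℓ] v ∈ Z' ∪ {x₁}) (hI1₂ : ∀ v, ∃ ℓ, c₂^[ℓ] v ∈ Z' ∪ {x₂})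
    (hI2₁ : ∃ k, c₁^[k] aa = x₁ ∧ ∀ j < k, c₁^[j] aa ∉ Z')
    (hI2₂ : ∃ k, c₂^[k] aa = x₂ ∧ ∀ j < k, c₂^[j] aa ∉ Z') :
    x₁ = x₂ := by
  by_contra hne
  obtain ⟨k₁, hk₁, hmin₁⟩ := min_endpoint' (S := Z') h₁ hI2₁
  obtain ⟨k₂, hk₂, hmin₂⟩ := min_endpoint' (S := Z') h₂ hI2₂
  have hag₁ : ∀ j ≤ k₁, σ^[j] aa = c₁^[j] aa := by
    intro j hj
    refine iter_agree' (fun v hv => (hc₁ v hv).symm) j aa (fun i hi hix => ?_)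
    exact hmin₁ i (by omega) (Or.inr hix)
  have hag₂ : ∀ j ≤ k₂, σ^[j] aa = c₂^[j] aa := by
    intro j hj
    refine iter_agree' (fun v hv => (hc₂ v hv).symm) j aa (fun i hi hix => ?_)
    exact hmin₂ i (by omega) (Or.inr hix)
  have hp₁ : σ^[k₁] aa = x₁ := (hag₁ k₁ le_rfl).trans hk₁
  have hp₂ : σ^[k₂] aa = x₂ := (hag₂ k₂ le_rfl).trans hk₂
  have hav₁ : ∀ j < k₁, σ^[j] aa ∉ Z' := by
    intro j hj
    rw [hag₁ j (le_of_lt hj)]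
    exact fun hm => hmin₁ j hj (Or.inl hm)
  have hav₂ : ∀ j < k₂, σ^[j] aa ∉ Z' := by
    intro j hj
    rw [hag₂ j (le_of_lt hj)]
    exact fun hm => hmin₂ j hj (Or.inl hm)
  rcases lt_trichotomy k₁ k₂ with hlt | heq | hgt
  · exact reverse_core h₂ hne hσ₁ hσ₂ hc₁ hI1₁ hp₁ hp₂ hav₂ hlt
  · exact hne (by rw [← hp₁, heq, hp₂])
  · exact reverse_core h₁ (Ne.symm hne) hσ₂ hσ₁ hc₂ hI1₂ hp₂ hp₁ hav₁ hgt

lemma no_return {p : V × (V → V)} {aa : V} {ρ : V → V} (hx : p.1 ∉ Z')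
    (hstep : rotorStep τ Z' p = (aa, ρ))
    (hI2 : ∃ k, p.2^[k] aa = p.1 ∧ ∀ j < k, p.2^[j] aa ∉ Z')
    (hSF : ∃ ℓ, ρ^[ℓ] aa ∈ Z') : False := by
  obtain ⟨x, c⟩ := p
  simp only at hx hI2
  rw [rotorStep_of_notMem hx, Prod.mk.injEq] at hstep
  obtain ⟨hpos, hconf⟩ := hstep
  have hρ : ρ = Function.update c x aa := by rw [← hconf, hpos]
  obtain ⟨k, hk, hkmin⟩ := min_endpoint' (S := Z') hx hI2
  have hagree : ∀ j ≤ k, ρ^[j] aa = c^[j] aa := by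
    intro j hj
    refine iter_agree' (fun v hv => by rw [hρ, Function.update_of_ne hv]) j aa
      (fun i hi hix => hkmin i (by omega) (Or.inr hix))
  have hk' : ρ^[k] aa = x := (hagree k le_rfl).trans hk
  have hcyc : ρ^[k + 1] aa = aa := by
    rw [Function.iterate_succ_apply', hk', hρ, Function.update_self]
  have hall : ∀ m, ρ^[m] aa ∉ Z' := by
    intro m
    rw [iterate_mod' (Nat.succ_pos k) hcyc m]
    have hmlt : m % (k + 1) < k + 1 := Nat.mod_lt _ (Nat.succ_pos k)
    rcases Nat.lt_succ_iff_lt_or_eq.mp hmlt with h | h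
    · rw [hagree _ (le_of_lt h)]
      exact fun hm => hkmin _ h (Or.inl hm)
    · rw [h, hk']; exact hx
  obtain ⟨ℓ, hℓ⟩ := hSF
  exact hall ℓ hℓ

/-- helper for endpoint determinism -/
lemma endpoint_det {σ : V → V} {aa p₁ p₂ : V}
    (h1 : ∃ k, σ^[k] aa = p₁ ∧ ∀ j < k, σ^[j] aa ∉ Z') (hp1 : p₁ ∈ Z')
    (h2 : ∃ k, σ^[k] aa = p₂ ∧ ∀ j < k, σ^[j] aa ∉ Z') (hp2 : p₂ ∈ Z') :
    p₁ = p₂ := by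
  obtain ⟨k₁, hk₁, hm₁⟩ := h1
  obtain ⟨k₂, hk₂, hm₂⟩ := h2
  rcases lt_trichotomy k₁ k₂ with h | h | h
  · exact absurd (hk₁ ▸ hp1) (hm₂ k₁ h)
  · rw [← hk₁, h, hk₂]
  · exact absurd (hk₂ ▸ hp2) (hm₁ k₂ h)

end RotorLemmas
section MainLemmas

variable {V : Type u} [DecidableEq V] {G : SimpleGraph V} {τ : V → V → V} {Z' : Set V}

lemma rotorWalk_succ (τ : V → V → V) (Z' : Set V) (a : V) (ρ : V → V) (n : ℕ) :
    rotorWalk τ Z' a ρ (n + 1) = rotorStep τ Z' (rotorWalk τ Z' a ρ n) :=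
  Function.iterate_succ_apply' _ _ _

lemma rotorWalk_add (τ : V → V → V) (Z' : Set V) (a : V) (ρ : V → V) (m n : ℕ) :
    (rotorStep τ Z')^[m] (rotorWalk τ Z' a ρ n) = rotorWalk τ Z' a ρ (m + n) := by
  simp only [rotorWalk, Function.iterate_add_apply]

lemma good_walk (hτ : IsMechanism G τ) {a : V} {ρ : V → V} (hρ : ρ ∈ SFset G Z') (n : ℕ)
    (hpos : ∀ m < n, (rotorWalk τ Z' a ρ m).1 ∉ Z') :
    GoodSt G Z' a (rotorWalk τ Z' a ρ n) := by
  have h0 : GoodSt G Z' a ((a, ρ) : V × (V → V)) :=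
    ⟨hρ.2.2, hρ.1, fun v => (hρ.2.1 v).imp (fun ℓ h => Or.inl h), ⟨0, rfl, by omega⟩⟩
  exact good_iter hτ h0 n hpos

lemma good_walk_from (hτ : IsMechanism G τ) {a : V} {ρ : V → V} (hρ : ρ ∈ SFset G Z')
    (t₀ n : ℕ) (hpos : ∀ m < t₀ + n, (rotorWalk τ Z' a ρ m).1 ∉ Z') :
    GoodSt G Z' ((rotorWalk τ Z' a ρ t₀).1) (rotorWalk τ Z' a ρ (t₀ + n)) := by
  have h1 : GoodSt G Z' a (rotorWalk τ Z' a ρ t₀) :=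
    good_walk hτ hρ t₀ (fun m hm => hpos m (by omega))
  have h2 : GoodSt G Z' ((rotorWalk τ Z' a ρ t₀).1) (rotorWalk τ Z' a ρ t₀) :=
    ⟨h1.1, h1.2.1, h1.2.2.1, ⟨0, rfl, by omega⟩⟩
  have h3 := good_iter hτ h2 n (fun m hm => by
    rw [rotorWalk_add]
    exact hpos (m + t₀) (by omega))
  rw [rotorWalk_add] at h3
  rwa [show n + t₀ = t₀ + n by omega] at h3

end MainLemmas

/-- The final configuration map used in the proof of Statement 11: run the rotor walk
until it first hits the sink and record the resulting rotor configuration. -/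
noncomputable def phiMap {V : Type u} [DecidableEq V] (τ : V → V → V) (Z' : Set V) (a : V)
    (ρ : V → V) : V → V :=
  if h : ∃ t, (rotorWalk τ Z' a ρ t).1 ∈ Z' then (rotorWalk τ Z' a ρ (Nat.find h)).2 else ρ

lemma phiMap_eq {V : Type u} [DecidableEq V] {τ : V → V → V} {Z' : Set V} {a : V}
    {ρ : V → V} (h : ∃ t, (rotorWalk τ Z' a ρ t).1 ∈ Z') :
    phiMap τ Z' a ρ = (rotorWalk τ Z' a ρ (Nat.find h)).2 := dif_pos h
/-- If `Z` is nonempty finite and `Z ⊆ Z'` with `V ∖ Z'` finite, then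
the number of `ρ ∈ SF(Z')` lying in `E_{r,Z}(a,Z')` is at most the number of
`ρ ∈ SF(Z')` lying in `D_r`; equivalently, for `ρ` uniform on `SF(Z')`,
`P[ρ ∈ E_{r,Z}(a,Z')] ≤ P[ρ ∈ D_r]`. -/
theorem stmt11 {V : Type u} [DecidableEq V] (G : SimpleGraph V) (hconn : G.Connected)
    [∀ v : V, Fintype (G.neighborSet v)] (τ : V → V → V) (hτ : IsMechanism G τ)
    (Z : Set V) (hZ : Z.Nonempty) (hZfin : Z.Finite)
    (Z' : Set V) (hsub : Z ⊆ Z') (hZ'fin : (Z'ᶜ : Set V).Finite)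
    (a : V) (r : ℕ) :
    (SFset G Z' ∩ Eset G τ r Z a Z').ncard ≤ (SFset G Z' ∩ Dset G Z r).ncard := by
  classical
  -- every configuration in the event `E` leads the walk into the sink
  have hhit : ∀ ρ ∈ Eset G τ r Z a Z', ∃ t, (rotorWalk τ Z' a ρ t).1 ∈ Z' := by
    rintro ρ ⟨t₁, t₂, -, -, -, hmem⟩
    exact ⟨t₂, hsub hmem⟩
  -- the map sends `SF ∩ E` into `SF ∩ D`
  have hmaps : ∀ ρ ∈ SFset G Z' ∩ Eset G τ r Z a Z',
      phiMap τ Z' a ρ ∈ SFset G Z' ∩ Dset G Z r := by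
    rintro ρ ⟨hSF, hE⟩
    obtain ⟨t₁, t₂, ht12, hnot, hfar, hmem⟩ := hE
    have hh : ∃ t, (rotorWalk τ Z' a ρ t).1 ∈ Z' := ⟨t₂, hsub hmem⟩
    set T := Nat.find hh with hTdef
    have hTspec : (rotorWalk τ Z' a ρ T).1 ∈ Z' := Nat.find_spec hh
    have hTmin : ∀ s < T, (rotorWalk τ Z' a ρ s).1 ∉ Z' := fun s hs => Nat.find_min hh hs
    have hTt₂ : T = t₂ := le_antisymm (Nat.find_le (hsub hmem))
      (le_of_not_gt fun hlt => hnot T hlt hTspec)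
    have hXT : (rotorWalk τ Z' a ρ T).1 ∈ Z := by rw [hTt₂]; exact hmem
    have hΦ : phiMap τ Z' a ρ = (rotorWalk τ Z' a ρ T).2 := phiMap_eq hh
    set σ := (rotorWalk τ Z' a ρ T).2 with hσdef
    have hgT : GoodSt G Z' a (rotorWalk τ Z' a ρ T) := good_walk hτ hSF T hTmin
    have hσSF : σ ∈ SFset G Z' := by
      refine ⟨hgT.2.1, ?_, hgT.1⟩
      intro v
      obtain ⟨ℓ, hℓ⟩ := hgT.2.2.1 v
      rcases hℓ with h | h
      · exact ⟨ℓ, h⟩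
      · exact ⟨ℓ, by rw [Set.mem_singleton_iff.mp h]; exact hTspec⟩
    have hσD : σ ∈ Dset G Z r := by
      rcases Nat.eq_zero_or_pos r with hr | hr
      · obtain ⟨z₀, hz₀⟩ := hZ
        refine ⟨z₀, 0, fun w hw => by omega, ⟨z₀, hz₀, by simp [hr]⟩, hz₀⟩
      · have ht₁T : t₁ ≤ T := by omega
        have hgmid : GoodSt G Z' ((rotorWalk τ Z' a ρ t₁).1) (rotorWalk τ Z' a ρ T) := by
          have h := good_walk_from hτ hSF t₁ (T - t₁) (fun m hm => hTmin m (by omega))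
          rwa [show t₁ + (T - t₁) = T by omega] at h
        obtain ⟨k, hk, hkav⟩ := hgmid.2.2.2
        set x₁ := (rotorWalk τ Z' a ρ t₁).1 with hx₁def
        have hQ0 : ∀ w ∈ Z, r ≤ G.dist w (σ^[0] x₁) := by simpa using hfar
        have hPk : ¬ ∀ w ∈ Z, r ≤ G.dist w (σ^[k] x₁) := by
          intro h
          have h2 := h _ hXT
          rw [hk, SimpleGraph.dist_self] at h2
          omega
        obtain ⟨m, hPm, hmmin⟩ := exists_minimal'
          (P := fun j => ¬ ∀ w ∈ Z, r ≤ G.dist w (σ^[j] x₁)) ⟨k, hPk⟩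
        have hm0 : m ≠ 0 := fun h => hPm (h ▸ hQ0)
        have hmk : m ≤ k := le_of_not_gt fun h => hmmin k h hPk
        set j := m - 1 with hjdef
        have hQj : ∀ w ∈ Z, r ≤ G.dist w (σ^[j] x₁) := by
          by_contra h
          exact hmmin j (by omega) h
        push_neg at hPm
        obtain ⟨w₀, hw₀Z, hw₀⟩ := hPm
        have hjk : j < k := by omega
        have hadjj : G.Adj (σ^[j] x₁) (σ^[j + 1] x₁) := by
          rw [Function.iterate_succ_apply']
          exact hσSF.1 _ (hkav j hjk)
        have hmj : m = j + 1 := by omega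
        have htri : G.dist w₀ (σ^[j] x₁) ≤ G.dist w₀ (σ^[m] x₁) + 1 := by
          have h1 := hconn.dist_triangle (u := w₀) (v := σ^[m] x₁) (w := σ^[j] x₁)
          have h2 : G.dist (σ^[m] x₁) (σ^[j] x₁) = 1 := by
            rw [hmj, SimpleGraph.dist_comm]
            exact SimpleGraph.dist_eq_one_iff_adj.mpr hadjj
          omega
        have hdisteq : G.dist w₀ (σ^[j] x₁) = r :=
          le_antisymm (by omega) (hQj w₀ hw₀Z)
        refine ⟨σ^[j] x₁, k - j, hQj, ⟨w₀, hw₀Z, hdisteq⟩, ?_⟩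
        rw [← Function.iterate_add_apply, show k - j + j = k by omega, hk]
        exact hXT
    rw [hΦ]
    exact ⟨hσSF, hσD⟩
  -- injectivity of the map on `SF ∩ E`
  have key : ∀ ρ₁ ρ₂, ρ₁ ∈ SFset G Z' ∩ Eset G τ r Z a Z' →
      ρ₂ ∈ SFset G Z' ∩ Eset G τ r Z a Z' →
      ∀ (h1 : ∃ t, (rotorWalk τ Z' a ρ₁ t).1 ∈ Z') (h2 : ∃ t, (rotorWalk τ Z' a ρ₂ t).1 ∈ Z'),
      Nat.find h1 ≤ Nat.find h2 →
      (rotorWalk τ Z' a ρ₁ (Nat.find h1)).2 = (rotorWalk τ Z' a ρ₂ (Nat.find h2)).2 →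
      ρ₁ = ρ₂ := by
    intro ρ₁ ρ₂ hm₁ hm₂ h1 h2 hle hσeq
    set T₁ := Nat.find h1 with hT₁
    set T₂ := Nat.find h2 with hT₂
    have hT₁spec : (rotorWalk τ Z' a ρ₁ T₁).1 ∈ Z' := Nat.find_spec h1
    have hT₂spec : (rotorWalk τ Z' a ρ₂ T₂).1 ∈ Z' := Nat.find_spec h2
    have hnot₁ : ∀ s < T₁, (rotorWalk τ Z' a ρ₁ s).1 ∉ Z' := fun s hs => Nat.find_min h1 hs
    have hnot₂ : ∀ s < T₂, (rotorWalk τ Z' a ρ₂ s).1 ∉ Z' := fun s hs => Nat.find_min h2 hs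
    have hg₁ : ∀ n, n ≤ T₁ → GoodSt G Z' a (rotorWalk τ Z' a ρ₁ n) :=
      fun n hn => good_walk hτ hm₁.1 n (fun m hm => hnot₁ m (by omega))
    have hg₂ : ∀ n, n ≤ T₂ → GoodSt G Z' a (rotorWalk τ Z' a ρ₂ n) :=
      fun n hn => good_walk hτ hm₂.1 n (fun m hm => hnot₂ m (by omega))
    have hTeq : rotorWalk τ Z' a ρ₁ T₁ = rotorWalk τ Z' a ρ₂ T₂ := by
      have hI2₁ := (hg₁ T₁ le_rfl).2.2.2
      have hI2₂ := (hg₂ T₂ le_rfl).2.2.2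
      rw [hσeq] at hI2₁
      exact Prod.ext_iff.mpr ⟨endpoint_det hI2₁ hT₁spec hI2₂ hT₂spec, hσeq⟩
    have hsteps : ∀ jj, jj ≤ T₁ →
        rotorWalk τ Z' a ρ₁ (T₁ - jj) = rotorWalk τ Z' a ρ₂ (T₂ - jj) := by
      intro jj
      induction jj with
      | zero => intro _; simpa using hTeq
      | succ j ih =>
        intro hj
        have heq := ih (by omega)
        have e₁ : T₁ - j = (T₁ - (j + 1)) + 1 := by omega
        have e₂ : T₂ - j = (T₂ - (j + 1)) + 1 := by omega
        set n₁ := T₁ - (j + 1) with hn₁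
        set n₂ := T₂ - (j + 1) with hn₂
        rw [e₁, e₂, rotorWalk_succ, rotorWalk_succ] at heq
        have hx₁ : (rotorWalk τ Z' a ρ₁ n₁).1 ∉ Z' := hnot₁ n₁ (by omega)
        have hx₂ : (rotorWalk τ Z' a ρ₂ n₂).1 ∉ Z' := hnot₂ n₂ (by omega)
        have hG₁ := hg₁ n₁ (by omega)
        have hG₂ := hg₂ n₂ (by omega)
        rcases e₁' : rotorWalk τ Z' a ρ₁ n₁ with ⟨x₁, c₁⟩
        rcases e₂' : rotorWalk τ Z' a ρ₂ n₂ with ⟨x₂, c₂⟩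
        rw [e₁'] at heq hx₁ hG₁
        rw [e₂'] at heq hx₂ hG₂
        rw [rotorStep_of_notMem hx₁, rotorStep_of_notMem hx₂, Prod.mk.injEq] at heq
        dsimp only at heq hx₁ hx₂
        obtain ⟨hid₁, hadj₁, hI1₁, hI2₁⟩ := hG₁
        obtain ⟨hid₂, hadj₂, hI1₂, hI2₂⟩ := hG₂
        dsimp only at hid₁ hadj₁ hI1₁ hI2₁ hid₂ hadj₂ hI1₂ hI2₂
        obtain ⟨hyeq, hceq⟩ := heq
        set σ' := Function.update c₁ x₁ (τ x₁ (c₁ x₁)) with hσ'def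
        have hσ'₁ : σ' x₁ = τ x₁ (c₁ x₁) := Function.update_self _ _ _
        have hσ'₂ : σ' x₂ = τ x₁ (c₁ x₁) := by
          rw [hceq, Function.update_self, ← hyeq]
        have hc₁σ : ∀ v, v ≠ x₁ → c₁ v = σ' v :=
          fun v hv => (Function.update_of_ne hv _ _).symm
        have hc₂σ : ∀ v, v ≠ x₂ → c₂ v = σ' v := fun v hv => by
          rw [hceq, Function.update_of_ne hv]
        have hxeq : x₁ = x₂ :=
          reverse_pos_eq hx₁ hx₂ hσ'₁ hσ'₂ hc₁σ hc₂σ hI1₁ hI1₂ hI2₁ hI2₂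
        subst hxeq
        have hcc : c₁ x₁ = c₂ x₁ := by
          refine (hτ x₁).1.injOn ?_ ?_ ?_
          · exact (SimpleGraph.mem_neighborSet _ _ _).mpr (hadj₁ x₁ hx₁)
          · exact (SimpleGraph.mem_neighborSet _ _ _).mpr (hadj₂ x₁ hx₂)
          · exact hyeq
        have hcfg : c₁ = c₂ := by
          funext v
          by_cases hv : v = x₁
          · rw [hv]; exact hcc
          · rw [hc₁σ v hv, hc₂σ v hv]
        rw [hcfg]
    have h0 := hsteps T₁ le_rfl
    rw [Nat.sub_self] at h0
    rcases Nat.eq_zero_or_pos (T₂ - T₁) with hz | hpos2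
    · rw [hz] at h0
      exact congrArg Prod.snd h0
    · exfalso
      have e3 : T₂ - T₁ = (T₂ - T₁ - 1) + 1 := by omega
      have hstep2 : rotorStep τ Z' (rotorWalk τ Z' a ρ₂ (T₂ - T₁ - 1)) = (a, ρ₁) := by
        rw [← rotorWalk_succ, ← e3, ← h0]
        rfl
      have hg := hg₂ (T₂ - T₁ - 1) (by omega)
      exact no_return (hnot₂ _ (by omega)) hstep2 hg.2.2.2 (hm₁.1.2.1 a)
  -- finiteness of the target set
  have hSFfin : (SFset G Z').Finite := by
    haveI : Finite ↥(Z'ᶜ : Set V) := hZ'fin.to_subtype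
    have hinj : Function.Injective
        (fun (ρ : ↥(SFset G Z')) (x : ↥(Z'ᶜ : Set V)) =>
          (⟨ρ.1 x.1, (SimpleGraph.mem_neighborSet _ _ _).mpr (ρ.2.1 x.1 x.2)⟩ :
            ↥(G.neighborSet x.1))) := by
      intro ρ₁ ρ₂ h
      apply Subtype.ext
      funext v
      by_cases hv : v ∈ Z'
      · rw [ρ₁.2.2.2 v hv, ρ₂.2.2.2 v hv]
      · exact congrArg Subtype.val (congrFun h ⟨v, hv⟩)
    haveI : Finite ↥(SFset G Z') := Finite.of_injective _ hinj
    exact Set.finite_coe_iff.mp this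
  have hfin : (SFset G Z' ∩ Dset G Z r).Finite := hSFfin.inter_of_left _
  have hinjOn : Set.InjOn (phiMap τ Z' a) (SFset G Z' ∩ Eset G τ r Z a Z') := by
    intro ρ₁ hh₁ ρ₂ hh₂ heq
    have hex₁ := hhit ρ₁ hh₁.2
    have hex₂ := hhit ρ₂ hh₂.2
    rw [phiMap_eq hex₁, phiMap_eq hex₂] at heq
    rcases le_total (Nat.find hex₁) (Nat.find hex₂) with h | h
    · exact key ρ₁ ρ₂ hh₁ hh₂ hex₁ hex₂ h heq
    · exact (key ρ₂ ρ₁ hh₂ hh₁ hex₂ hex₁ h heq.symm).symm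
  have himg : phiMap τ Z' a '' (SFset G Z' ∩ Eset G τ r Z a Z') ⊆
      SFset G Z' ∩ Dset G Z r := by
    rintro _ ⟨ρ, hρ, rfl⟩
    exact hmaps ρ hρ
  calc (SFset G Z' ∩ Eset G τ r Z a Z').ncard
      = (phiMap τ Z' a '' (SFset G Z' ∩ Eset G τ r Z a Z')).ncard :=
        (Set.ncard_image_of_injOn hinjOn).symm
    _ ≤ (SFset G Z' ∩ Dset G Z r).ncard := Set.ncard_le_ncard himg hfin
end

section
/- Let Z be a nonempty subset of V with V∖Z finite. For any i ≥ 0 and any vertices a_0, a_1, …, a_{i−1} of G, the map ρ ↦ ξ_i(a_0,…,a_{i−1}, Z; ρ) is a bijection from SF(Z) to SF(Z); consequently, if ρ is sampled from the uniform measure OUSF(Z) on SF(Z), then ξ_i(a_0,…,a_{i−1}, Z; ρ) also has law OUSF(Z). -/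
open Classical

universe u

variable {V : Type u}

set_option linter.unusedSectionVars false

section RotorAux

variable [DecidableEq V]

private lemma it_agree (f : V → V) (x c w : V) :
    ∀ j : ℕ, (∀ i < j, f^[i] w ≠ x) → (Function.update f x c)^[j] w = f^[j] w := by
  intro j
  induction j with
  | zero => intro _; rfl
  | succ j ih =>
    intro h
    have hj : (Function.update f x c)^[j] w = f^[j] w :=
      ih fun i hi => h i (Nat.lt_succ_of_lt hi)
    rw [Function.iterate_succ_apply', Function.iterate_succ_apply', hj,
      Function.update_of_ne (h j (Nat.lt_succ_self j))]

private lemma it_agree' (f : V → V) (x c w : V) :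
    ∀ j : ℕ, (∀ i < j, (Function.update f x c)^[i] w ≠ x) →
      (Function.update f x c)^[j] w = f^[j] w := by
  intro j
  induction j with
  | zero => intro _; rfl
  | succ j ih =>
    intro h
    have hj : (Function.update f x c)^[j] w = f^[j] w :=
      ih fun i hi => h i (Nat.lt_succ_of_lt hi)
    have hne : f^[j] w ≠ x := hj ▸ h j (Nat.lt_succ_self j)
    rw [Function.iterate_succ_apply', Function.iterate_succ_apply', hj,
      Function.update_of_ne hne]

private lemma it_freeze (f : V → V) (Z : Set V) (hfix : ∀ z ∈ Z, f z = z)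
    {w : V} {k : ℕ} (hk : f^[k] w ∈ Z) :
    ∀ d : ℕ, f^[k + d] w = f^[k] w := by
  intro d
  induction d with
  | zero => rfl
  | succ d ih =>
    have : k + (d + 1) = (k + d) + 1 := rfl
    rw [this, Function.iterate_succ_apply', ih, hfix _ hk]

private lemma it_cycle (f : V → V) {w : V} {n : ℕ} (hn : f^[n] w = w) :
    ∀ q r : ℕ, f^[n * q + r] w = f^[r] w := by
  intro q
  induction q with
  | zero => intro r; simp
  | succ q ih =>
    intro r
    have h : n * (q + 1) + r = (n * q + r) + n := by ring
    rw [h, Function.iterate_add_apply, hn, ih]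

private lemma it_mod (f : V → V) {w : V} {n : ℕ} (hn : f^[n] w = w)
    (ℓ : ℕ) : f^[ℓ] w = f^[ℓ % n] w := by
  conv_lhs => rw [← Nat.div_add_mod ℓ n]
  exact it_cycle f hn (ℓ / n) (ℓ % n)

/-- The invariant maintained by the rotor walk started at `a`: rotors of non-sink
vertices point to neighbors, rotors fix `Z`, every rotor path reaches `Z` or the
current position, and the rotor path from `a` reaches the current position. -/
private def VState (G : SimpleGraph V) (Z : Set V) (a : V) (p : V × (V → V)) : Prop :=
  (∀ v, v ∉ Z → G.Adj v (p.2 v)) ∧ (∀ v ∈ Z, p.2 v = v) ∧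
    (∀ v, ∃ ℓ : ℕ, p.2^[ℓ] v ∈ Z ∨ p.2^[ℓ] v = p.1) ∧ (∃ j : ℕ, p.2^[j] a = p.1)

private lemma rotorStep_frozen {τ : V → V → V} {Z : Set V} {p : V × (V → V)}
    (h : p.1 ∈ Z) : rotorStep τ Z p = p := if_pos h

private lemma rotorStep_active {τ : V → V → V} {Z : Set V} {p : V × (V → V)}
    (h : p.1 ∉ Z) :
    rotorStep τ Z p = (τ p.1 (p.2 p.1), Function.update p.2 p.1 (τ p.1 (p.2 p.1))) :=
  if_neg h

private lemma walk_zero (τ : V → V → V) (Z : Set V) (a : V) (ρ : V → V) :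
    rotorWalk τ Z a ρ 0 = (a, ρ) := rfl

private lemma walk_succ (τ : V → V → V) (Z : Set V) (a : V) (ρ : V → V) (t : ℕ) :
    rotorWalk τ Z a ρ (t + 1) = rotorStep τ Z (rotorWalk τ Z a ρ t) :=
  Function.iterate_succ_apply' _ _ _

private lemma walk_frozen {τ : V → V → V} {Z : Set V} {a : V} {ρ : V → V} {T : ℕ}
    (h : (rotorWalk τ Z a ρ T).1 ∈ Z) :
    ∀ d : ℕ, rotorWalk τ Z a ρ (T + d) = rotorWalk τ Z a ρ T := by
  intro d
  induction d with
  | zero => rfl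
  | succ d ih =>
    have e : T + (d + 1) = (T + d) + 1 := rfl
    rw [e, walk_succ, ih, rotorStep_frozen h]

private lemma vstate_step {G : SimpleGraph V} {τ : V → V → V}
    (hτ : IsMechanism G τ) {Z : Set V} {a : V}
    {p : V × (V → V)} (hp : VState G Z a p) : VState G Z a (rotorStep τ Z p) := by
  classical
  by_cases hz : p.1 ∈ Z
  · rw [rotorStep_frozen hz]; exact hp
  · obtain ⟨x, ρ⟩ := p
    obtain ⟨h1, h2, h3, h4⟩ := hp
    simp only at hz h1 h2 h3 h4
    have hst : rotorStep τ Z (x, ρ) = (τ x (ρ x), Function.update ρ x (τ x (ρ x))) :=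
      rotorStep_active hz
    rw [hst]
    dsimp only [VState]
    set y := τ x (ρ x) with hy
    have hρx : ρ x ∈ G.neighborSet x := (G.mem_neighborSet x (ρ x)).mpr (h1 x hz)
    have hyN : y ∈ G.neighborSet x := (hτ x).1.mapsTo hρx
    have hadjy : G.Adj x y := (G.mem_neighborSet x y).mp hyN
    refine ⟨?_, ?_, ?_, ?_⟩
    · intro v hv
      by_cases hvx : v = x
      · subst hvx; simpa [Function.update_self] using hadjy
      · rw [Function.update_of_ne hvx]; exact h1 v hv
    · intro v hvZ
      have hvx : v ≠ x := by rintro rfl; exact hz hvZ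
      rw [Function.update_of_ne hvx]; exact h2 v hvZ
    · intro v
      obtain ⟨ℓ, hℓ⟩ := h3 v
      have hex : ∃ m : ℕ, ρ^[m] v ∈ Z ∨ ρ^[m] v = x := ⟨ℓ, hℓ⟩
      set ℓ0 := Nat.find hex with hℓ0
      have havoid : ∀ i < ℓ0, ρ^[i] v ≠ x := by
        intro i hi hix
        exact Nat.find_min hex hi (Or.inr hix)
      have htr : (Function.update ρ x y)^[ℓ0] v = ρ^[ℓ0] v :=
        it_agree ρ x y v ℓ0 havoid
      rcases Nat.find_spec hex with hZ' | hx'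
      · exact ⟨ℓ0, Or.inl (by rw [htr]; exact hZ')⟩
      · refine ⟨ℓ0 + 1, Or.inr ?_⟩
        rw [Function.iterate_succ_apply', htr, hx', Function.update_self]
    · obtain ⟨j, hj⟩ := h4
      have hex : ∃ m : ℕ, ρ^[m] a = x := ⟨j, hj⟩
      set j0 := Nat.find hex with hj0
      have havoid : ∀ i < j0, ρ^[i] a ≠ x := fun i hi => Nat.find_min hex hi
      have htr : (Function.update ρ x y)^[j0] a = ρ^[j0] a :=
        it_agree ρ x y a j0 havoid
      refine ⟨j0 + 1, ?_⟩
      rw [Function.iterate_succ_apply', htr, Nat.find_spec hex, Function.update_self]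

private lemma vstate_walk {G : SimpleGraph V} {τ : V → V → V}
    (hτ : IsMechanism G τ) {Z : Set V} {a : V} {ρ : V → V}
    (hρ : ρ ∈ SFset G Z) (t : ℕ) : VState G Z a (rotorWalk τ Z a ρ t) := by
  induction t with
  | zero =>
    obtain ⟨hadj, hreach, hfix⟩ := hρ
    exact ⟨hadj, hfix, fun v => (hreach v).imp fun ℓ h => Or.inl h, ⟨0, rfl⟩⟩
  | succ t ih =>
    rw [walk_succ]; exact vstate_step hτ ih



private lemma inf_gt {s : Set ℕ} (hs : s.Infinite) (n : ℕ) : ∃ m ∈ s, n < m := by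
  by_contra h
  push_neg at h
  exact hs (Set.Finite.subset (Set.finite_Iic n) fun m hm => Set.mem_Iic.mpr (h m hm))

private lemma exists_period {G : SimpleGraph V} [∀ v : V, Fintype (G.neighborSet v)]
    {τ : V → V → V} (hτ : IsMechanism G τ) {x y : V} (hy : y ∈ G.neighborSet x) :
    ∃ p : ℕ, 1 ≤ p ∧ (τ x)^[p] y = y := by
  classical
  have hbij : ∀ n : ℕ, Set.BijOn (τ x)^[n] (G.neighborSet x) (G.neighborSet x) := by
    intro n
    induction n with
    | zero => simpa using Set.bijOn_id (G.neighborSet x)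
    | succ n ih =>
      rw [Function.iterate_succ]
      exact ih.comp (hτ x).1
  obtain ⟨k, l, hkl, he⟩ := Finite.exists_ne_map_eq_of_infinite
    (fun n : ℕ => (⟨(τ x)^[n] y, (hbij n).mapsTo hy⟩ : ↥(G.neighborSet x)))
  have hval : (τ x)^[k] y = (τ x)^[l] y := congrArg Subtype.val he
  have key : ∀ k l : ℕ, k < l → (τ x)^[k] y = (τ x)^[l] y → ∃ p, 1 ≤ p ∧ (τ x)^[p] y = y := by
    intro k l hlt hv
    refine ⟨l - k, by omega, ?_⟩
    have h1 : (τ x)^[k + (l - k)] y = (τ x)^[k] ((τ x)^[l - k] y) :=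
      Function.iterate_add_apply _ _ _ _
    have h2 : k + (l - k) = l := by omega
    have h3 : (τ x)^[k] ((τ x)^[l - k] y) = (τ x)^[k] y := by rw [← h1, h2, ← hv]
    exact ((hbij k).injOn ((hbij (l - k)).mapsTo hy) hy h3)
  rcases hkl.lt_or_gt with h | h
  · exact key k l h hval
  · exact key l k h hval.symm

private lemma exists_hit {G : SimpleGraph V} (hconn : G.Connected)
    [∀ v : V, Fintype (G.neighborSet v)] {τ : V → V → V} (hτ : IsMechanism G τ)
    {Z : Set V} (hZ : Z.Nonempty) (hfin : (Zᶜ : Set V).Finite)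
    {a : V} {ρ : V → V} (hρ : ρ ∈ SFset G Z) :
    ∃ t : ℕ, (rotorWalk τ Z a ρ t).1 ∈ Z := by
  classical
  by_contra hcon
  push_neg at hcon
  set w := fun t => rotorWalk τ Z a ρ t with hw
  have hV1 : ∀ t, ∀ v, v ∉ Z → G.Adj v ((w t).2 v) := fun t => (vstate_walk hτ hρ t).1
  have hstep : ∀ t, w (t + 1) =
      (τ (w t).1 ((w t).2 (w t).1),
        Function.update (w t).2 (w t).1 (τ (w t).1 ((w t).2 (w t).1))) := by
    intro t
    exact (walk_succ τ Z a ρ t).trans (rotorStep_active (hcon t))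
  have hpos : ∀ t, (w (t + 1)).1 = τ (w t).1 ((w t).2 (w t).1) := by
    intro t; rw [hstep t]
  have hcfg : ∀ t, (w (t + 1)).2 =
      Function.update (w t).2 (w t).1 (τ (w t).1 ((w t).2 (w t).1)) := by
    intro t; rw [hstep t]
  -- some vertex is visited infinitely often
  haveI : Finite ↥(Zᶜ : Set V) := hfin.to_subtype
  obtain ⟨v0, hv0⟩ := Finite.exists_infinite_fiber
    (fun t : ℕ => (⟨(w t).1, hcon t⟩ : ↥(Zᶜ : Set V)))
  set IV := fun v : V => ∀ n : ℕ, ∃ t, n < t ∧ (w t).1 = v with hIV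
  have hv0' : IV ↑v0 := by
    intro n
    have hinf : ((fun t : ℕ => (⟨(w t).1, hcon t⟩ : ↥(Zᶜ : Set V))) ⁻¹' {v0}).Infinite :=
      Set.infinite_coe_iff.mp hv0
    obtain ⟨m, hm, hnm⟩ := inf_gt hinf n
    exact ⟨m, hnm, congrArg Subtype.val hm⟩
  -- rotor at an infinitely visited vertex runs through the full orbit
  have hrot : ∀ v, IV v → ∀ t0, (w t0).1 = v → ∀ k : ℕ,
      ∃ s, t0 ≤ s ∧ (w s).1 = v ∧ (w s).2 v = (τ v)^[k] ((w t0).2 v) := by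
    intro v hiv t0 ht0 k
    induction k with
    | zero => exact ⟨t0, le_rfl, ht0, rfl⟩
    | succ k ih =>
      obtain ⟨s, hs1, hs2, hs3⟩ := ih
      have hexm : ∃ m : ℕ, (w (s + 1 + m)).1 = v := by
        obtain ⟨t, hst, htv⟩ := hiv s
        exact ⟨t - (s + 1), by rw [show s + 1 + (t - (s + 1)) = t by omega]; exact htv⟩
      set m0 := Nat.find hexm with hm0
      have humin : ∀ i < m0, (w (s + 1 + i)).1 ≠ v := fun i hi => Nat.find_min hexm hi
      have hcfg1 : (w (s + 1)).2 v = τ v ((w s).2 v) := by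
        rw [hcfg s, hs2, Function.update_self]
      have hconst : ∀ d ≤ m0, (w (s + 1 + d)).2 v = (w (s + 1)).2 v := by
        intro d hd
        induction d with
        | zero => rfl
        | succ d ihd =>
          have e : s + 1 + (d + 1) = (s + 1 + d) + 1 := rfl
          rw [e, hcfg (s + 1 + d), Function.update_of_ne, ihd (by omega)]
          · exact fun hvv => humin d (by omega) hvv.symm
      refine ⟨s + 1 + m0, by omega, Nat.find_spec hexm, ?_⟩
      rw [hconst m0 le_rfl, hcfg1, hs3, ← Function.iterate_succ_apply' (τ v)]
  -- infinitely visited vertices propagate to neighbors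
  have hclose : ∀ v, IV v → ∀ u, G.Adj v u → IV u := by
    intro v hv u hadj n
    obtain ⟨t, hnt, htv⟩ := hv n
    have hvZ : v ∉ Z := htv ▸ hcon t
    have hyv : (w t).2 v ∈ G.neighborSet v := (G.mem_neighborSet _ _).mpr (hV1 t v hvZ)
    have hu : u ∈ G.neighborSet v := (G.mem_neighborSet _ _).mpr hadj
    obtain ⟨i, hi⟩ := (hτ v).2 _ hyv _ hu
    obtain ⟨p, hp1, hp⟩ := exists_period hτ hyv
    have hip : (τ v)^[i + p] ((w t).2 v) = u := by
      rw [Function.iterate_add_apply, hp, hi]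
    obtain ⟨s, hts, hsv, hscfg⟩ := hrot v hv t htv (i + p - 1)
    have hip' : (τ v)^[i + p - 1 + 1] ((w t).2 v) = u := by
      rw [show i + p - 1 + 1 = i + p by omega]; exact hip
    have hfin' : (w (s + 1)).1 = u := by
      rw [hpos s, hsv, hscfg, ← Function.iterate_succ_apply' (τ v)]
      exact hip'
    exact ⟨s + 1, by omega, hfin'⟩
  -- propagate along a walk to the sink: contradiction
  have hwalkS : ∀ (u x : V) (pw : G.Walk u x), IV u → IV x := by
    intro u x pw
    induction pw with
    | nil => exact id
    | cons hadj _ ih => exact fun hu => ih (hclose _ hu _ hadj)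
  obtain ⟨z, hz⟩ := hZ
  obtain ⟨pw⟩ := hconn.preconnected ↑v0 z
  obtain ⟨t, _, htz⟩ := hwalkS _ _ pw hv0' 0
  exact hcon t (htz ▸ hz)

private lemma step_inj {G : SimpleGraph V} {τ : V → V → V} (hτ : IsMechanism G τ)
    {Z : Set V} {a : V} {x1 x2 : V} {ρ1 ρ2 : V → V} (h1Z : x1 ∉ Z) (h2Z : x2 ∉ Z)
    (hp : VState G Z a (x1, ρ1)) (hq : VState G Z a (x2, ρ2))
    (heq : rotorStep τ Z (x1, ρ1) = rotorStep τ Z (x2, ρ2)) :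
    x1 = x2 ∧ ρ1 = ρ2 := by
  classical
  obtain ⟨hp1, hp2, hp3, hp4⟩ := hp
  obtain ⟨hq1, hq2, hq3, hq4⟩ := hq
  dsimp only at hp1 hp2 hp3 hp4 hq1 hq2 hq3 hq4
  have hst1 : rotorStep τ Z (x1, ρ1) =
      (τ x1 (ρ1 x1), Function.update ρ1 x1 (τ x1 (ρ1 x1))) := rotorStep_active h1Z
  have hst2 : rotorStep τ Z (x2, ρ2) =
      (τ x2 (ρ2 x2), Function.update ρ2 x2 (τ x2 (ρ2 x2))) := rotorStep_active h2Z
  rw [hst1, hst2] at heq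
  set y := τ x1 (ρ1 x1) with hydef
  have hyeq : τ x2 (ρ2 x2) = y := (congrArg Prod.fst heq).symm
  set ρ' := Function.update ρ1 x1 y with hρ'def
  have h2nd : ρ' = Function.update ρ2 x2 y := by
    have h := congrArg Prod.snd heq
    dsimp only at h
    rw [hyeq] at h
    exact h
  -- adjacency facts
  have hρx1 : ρ1 x1 ∈ G.neighborSet x1 := (G.mem_neighborSet _ _).mpr (hp1 x1 h1Z)
  have hρx2 : ρ2 x2 ∈ G.neighborSet x2 := (G.mem_neighborSet _ _).mpr (hq1 x2 h2Z)
  have hadj1 : G.Adj x1 y := (G.mem_neighborSet _ _).mp ((hτ x1).1.mapsTo hρx1)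
  have hadj2 : G.Adj x2 y := by
    have := (hτ x2).1.mapsTo hρx2
    rw [hyeq] at this
    exact (G.mem_neighborSet _ _).mp this
  have hyx1 : y ≠ x1 := hadj1.ne'
  have hyx2 : y ≠ x2 := hadj2.ne'
  have hmain : x1 = x2 := by
    by_contra hne
    have hρ'x1 : ρ' x1 = y := Function.update_self _ _ _
    have hρ'x2 : ρ' x2 = y := by rw [h2nd]; exact Function.update_self _ _ _
    -- validity of the image state
    have himg : VState G Z a (y, ρ') := by
      have h := vstate_step hτ (show VState G Z a (x1, ρ1) from ⟨hp1, hp2, hp3, hp4⟩)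
        (τ := τ)
      rwa [hst1] at h
    obtain ⟨him1, hfix', hreach', him4⟩ := himg
    dsimp only at him1 hfix' hreach' him4
    -- the first positive time the rotor path from y meets Z ∪ {x1, x2, y}
    have hexP : ∃ m : ℕ, ρ'^[m + 1] y ∈ Z ∨ ρ'^[m + 1] y = x1 ∨
        ρ'^[m + 1] y = x2 ∨ ρ'^[m + 1] y = y := by
      obtain ⟨ℓ, hℓ⟩ := hreach' (ρ' y)
      rw [← Function.iterate_succ_apply ρ' ℓ y] at hℓ
      refine ⟨ℓ, ?_⟩
      rcases hℓ with h | h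
      · exact Or.inl h
      · exact Or.inr (Or.inr (Or.inr h))
    set m0 := Nat.find hexP with hm0
    set n := m0 + 1 with hn
    have hspec := Nat.find_spec hexP
    have havoid : ∀ i, 1 ≤ i → i < n →
        ρ'^[i] y ∉ Z ∧ ρ'^[i] y ≠ x1 ∧ ρ'^[i] y ≠ x2 ∧ ρ'^[i] y ≠ y := by
      intro i h1i h2i
      have hmin := Nat.find_min hexP (show i - 1 < m0 by omega)
      push_neg at hmin
      rw [show i - 1 + 1 = i by omega] at hmin
      exact hmin
    -- a rotor cycle through y avoiding Z and the current position is absurd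
    have hcyc : ∀ (ρ : V → V) (x : V) (n0 : ℕ), 1 ≤ n0 → ρ^[n0] y = y →
        (∀ i < n0, ρ^[i] y ∉ Z ∧ ρ^[i] y ≠ x) →
        (∀ v, ∃ ℓ : ℕ, ρ^[ℓ] v ∈ Z ∨ ρ^[ℓ] v = x) → False := by
      intro ρ x n0 hn0 hcycle hav hre
      obtain ⟨ℓ, hℓ⟩ := hre y
      have hmod := it_mod ρ hcycle ℓ
      have hr : ℓ % n0 < n0 := Nat.mod_lt _ (by omega)
      rw [hmod] at hℓ
      rcases hℓ with h | h
      · exact (hav _ hr).1 h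
      · exact (hav _ hr).2 h
    by_cases hZc : ρ'^[n] y ∈ Z
    · -- the path from y reaches Z : use the rotor paths from a
      have hyall : ∀ x' : V, y ≠ x' → x' ∉ Z →
          (∀ i, 1 ≤ i → i < n → ρ'^[i] y ≠ x') → ∀ i, ρ'^[i] y ≠ x' := by
        intro x' h0 hx'Z hmid i
        rcases Nat.eq_zero_or_pos i with rfl | hip
        · simpa using h0
        · rcases Nat.lt_or_ge i n with hin | hin
          · exact hmid i hip hin
          · have hfr := it_freeze ρ' Z hfix' (k := n) hZc (i - n)
            rw [show n + (i - n) = i by omega] at hfr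
            rw [hfr]
            intro hc
            rw [hc] at hZc
            exact hx'Z hZc
      have hy1 : ∀ i, ρ'^[i] y ≠ x1 :=
        hyall x1 hyx1 h1Z fun i a b => (havoid i a b).2.1
      have hy2 : ∀ i, ρ'^[i] y ≠ x2 :=
        hyall x2 hyx2 h2Z fun i a b => (havoid i a b).2.2.1
      have hexj1 : ∃ j : ℕ, ρ1^[j] a = x1 := hp4
      have hexj2 : ∃ j : ℕ, ρ2^[j] a = x2 := hq4
      set j1 := Nat.find hexj1 with hj1
      set j2 := Nat.find hexj2 with hj2
      have htrj1 : ρ'^[j1] a = x1 :=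
        (it_agree ρ1 x1 y a j1 fun i hi => Nat.find_min hexj1 hi).trans (Nat.find_spec hexj1)
      have htrj2 : ρ'^[j2] a = x2 := by
        rw [h2nd]
        exact (it_agree ρ2 x2 y a j2 fun i hi => Nat.find_min hexj2 hi).trans
          (Nat.find_spec hexj2)
      have hj12 : j1 ≠ j2 := fun h => hne (by rw [← htrj1, h, htrj2])
      have hstep1 : ρ'^[j1 + 1] a = y := by
        rw [Function.iterate_succ_apply', htrj1, hρ'x1]
      have hstep2 : ρ'^[j2 + 1] a = y := by
        rw [Function.iterate_succ_apply', htrj2, hρ'x2]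
      rcases hj12.lt_or_gt with hlt | hlt
      · have e : j2 = (j2 - (j1 + 1)) + (j1 + 1) := by omega
        have hh : ρ'^[j2] a = ρ'^[j2 - (j1 + 1)] y := by
          conv_lhs => rw [e, Function.iterate_add_apply]
          rw [hstep1]
        exact hy2 _ (by rw [← hh, htrj2])
      · have e : j1 = (j1 - (j2 + 1)) + (j2 + 1) := by omega
        have hh : ρ'^[j1] a = ρ'^[j1 - (j2 + 1)] y := by
          conv_lhs => rw [e, Function.iterate_add_apply]
          rw [hstep2]
        exact hy1 _ (by rw [← hh, htrj1])
    · -- otherwise the path from y comes back to x1, x2 or y, creating a cycle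
      have hyZ : y ∉ Z := by
        intro hyZ'
        apply hZc
        have hfr := it_freeze ρ' Z hfix' (k := 0) (show ρ'^[0] y ∈ Z from hyZ') n
        rw [zero_add] at hfr
        rw [hfr]
        exact hyZ'
      rcases hspec with h | hx1c | hx2c | hyc
      · exact hZc h
      · -- ρ'^[n] y = x1 : cycle of length n+1 in ρ2
        have hav2 : ∀ i < n + 1, ρ'^[i] y ≠ x2 := by
          intro i hi
          rcases Nat.eq_zero_or_pos i with rfl | hip
          · simpa using hyx2
          · rcases Nat.lt_or_ge i n with hin | hin
            · exact (havoid i hip hin).2.2.1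
            · rw [show i = n by omega, hx1c]
              exact hne
        have hagree : ∀ i ≤ n + 1, ρ'^[i] y = ρ2^[i] y := by
          intro i hi
          rw [h2nd]
          refine it_agree' ρ2 x2 y y i fun k hk => ?_
          rw [← h2nd]
          exact hav2 k (by omega)
        have hcyc2 : ρ2^[n + 1] y = y := by
          rw [← hagree (n + 1) le_rfl, Function.iterate_succ_apply', hx1c, hρ'x1]
        refine hcyc ρ2 x2 (n + 1) (by omega) hcyc2 ?_ hq3
        intro i hi
        rw [← hagree i (by omega)]
        constructor
        · rcases Nat.eq_zero_or_pos i with rfl | hip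
          · simpa using hyZ
          · rcases Nat.lt_or_ge i n with hin | hin
            · exact (havoid i hip hin).1
            · rw [show i = n by omega, hx1c]
              exact h1Z
        · exact hav2 i (by omega)
      · -- ρ'^[n] y = x2 : cycle of length n+1 in ρ1
        have hav1 : ∀ i < n + 1, ρ'^[i] y ≠ x1 := by
          intro i hi
          rcases Nat.eq_zero_or_pos i with rfl | hip
          · simpa using hyx1
          · rcases Nat.lt_or_ge i n with hin | hin
            · exact (havoid i hip hin).2.1
            · rw [show i = n by omega, hx2c]
              exact fun h => hne h.symm
        have hagree : ∀ i ≤ n + 1, ρ'^[i] y = ρ1^[i] y := by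
          intro i hi
          exact it_agree' ρ1 x1 y y i fun k hk => hav1 k (by omega)
        have hcyc1 : ρ1^[n + 1] y = y := by
          rw [← hagree (n + 1) le_rfl, Function.iterate_succ_apply', hx2c, hρ'x2]
        refine hcyc ρ1 x1 (n + 1) (by omega) hcyc1 ?_ hp3
        intro i hi
        rw [← hagree i (by omega)]
        constructor
        · rcases Nat.eq_zero_or_pos i with rfl | hip
          · simpa using hyZ
          · rcases Nat.lt_or_ge i n with hin | hin
            · exact (havoid i hip hin).1
            · rw [show i = n by omega, hx2c]
              exact h2Z
        · exact hav1 i (by omega)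
      · -- ρ'^[n] y = y : cycle of length n in ρ1
        have hav1 : ∀ i < n, ρ'^[i] y ≠ x1 := by
          intro i hi
          rcases Nat.eq_zero_or_pos i with rfl | hip
          · simpa using hyx1
          · exact (havoid i hip hi).2.1
        have hagree : ∀ i ≤ n, ρ'^[i] y = ρ1^[i] y := by
          intro i hi
          exact it_agree' ρ1 x1 y y i fun k hk => hav1 k (by omega)
        have hcyc1 : ρ1^[n] y = y := by rw [← hagree n le_rfl]; exact hyc
        refine hcyc ρ1 x1 n (by omega) hcyc1 ?_ hp3
        intro i hi
        rw [← hagree i (le_of_lt hi)]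
        constructor
        · rcases Nat.eq_zero_or_pos i with rfl | hip
          · simpa using hyZ
          · exact (havoid i hip hi).1
        · exact hav1 i hi
  refine ⟨hmain, ?_⟩
  subst hmain
  have hval : τ x1 (ρ2 x1) = τ x1 (ρ1 x1) := hyeq
  have hxx : ρ1 x1 = ρ2 x1 := ((hτ x1).1.injOn hρx1 hρx2 hval.symm)
  funext v
  by_cases hv : v = x1
  · rw [hv]; exact hxx
  · have h := congrFun h2nd v
    rw [hρ'def] at h
    rwa [Function.update_of_ne hv, Function.update_of_ne hv] at h

/-- After at least one genuine step, the rotor path from `a` in the current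
configuration reaches the current position in at least one step. -/
private lemma cprime {τ : V → V → V} {Z : Set V} {a : V} {ρ : V → V} :
    ∀ m : ℕ, 1 ≤ m → (∀ s < m, (rotorWalk τ Z a ρ s).1 ∉ Z) →
      ∃ j : ℕ, 1 ≤ j ∧ ((rotorWalk τ Z a ρ m).2)^[j] a = (rotorWalk τ Z a ρ m).1 := by
  classical
  intro m hm
  induction m, hm using Nat.le_induction with
  | base =>
    intro hpre
    have h0 : (rotorWalk τ Z a ρ 0).1 ∉ Z := hpre 0 (by omega)
    have h01 : rotorWalk τ Z a ρ 1 = (τ a (ρ a), Function.update ρ a (τ a (ρ a))) := by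
      rw [walk_succ]
      exact rotorStep_active h0
    refine ⟨1, le_rfl, ?_⟩
    rw [h01]
    dsimp only
    rw [Function.iterate_one]
    exact Function.update_self _ _ _
  | succ m hm1 ih =>
    intro hpre
    obtain ⟨j, hj1, hj⟩ := ih fun s hs => hpre s (by omega)
    have hmZ : (rotorWalk τ Z a ρ m).1 ∉ Z := hpre m (by omega)
    set x := (rotorWalk τ Z a ρ m).1 with hx
    set f := (rotorWalk τ Z a ρ m).2 with hf
    have hstep : rotorWalk τ Z a ρ (m + 1) = (τ x (f x), Function.update f x (τ x (f x))) := by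
      rw [walk_succ]
      exact rotorStep_active hmZ
    by_cases hax : a = x
    · refine ⟨1, le_rfl, ?_⟩
      rw [hstep]
      simp only [Function.iterate_one]
      rw [← hax] at *
      exact Function.update_self _ _ _
    · have hexj : ∃ i : ℕ, f^[i] a = x := ⟨j, hj⟩
      set j0 := Nat.find hexj with hj0
      have havj : ∀ i < j0, f^[i] a ≠ x := fun i hi => Nat.find_min hexj hi
      have htr : (Function.update f x (τ x (f x)))^[j0] a = x :=
        (it_agree f x (τ x (f x)) a j0 havj).trans (Nat.find_spec hexj)
      refine ⟨j0 + 1, by omega, ?_⟩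
      rw [hstep]
      dsimp only
      rw [Function.iterate_succ_apply', htr, Function.update_self]

/-- Two terminating rotor walks from `a` on spanning forests that end in the
same state have the same initial configuration. -/
private lemma walks_inj {G : SimpleGraph V} {τ : V → V → V} (hτ : IsMechanism G τ)
    {Z : Set V} {a : V} :
    ∀ N m1 m2 : ℕ, m1 + m2 ≤ N → ∀ ρ1 ρ2 : V → V, ρ1 ∈ SFset G Z → ρ2 ∈ SFset G Z →
      (∀ s < m1, (rotorWalk τ Z a ρ1 s).1 ∉ Z) →
      (∀ s < m2, (rotorWalk τ Z a ρ2 s).1 ∉ Z) →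
      rotorWalk τ Z a ρ1 m1 = rotorWalk τ Z a ρ2 m2 → ρ1 = ρ2 := by
  classical
  intro N
  induction N with
  | zero =>
    intro m1 m2 hN ρ1 ρ2 h1 h2 hs1 hs2 heq
    have hm1 : m1 = 0 := by omega
    have hm2 : m2 = 0 := by omega
    subst hm1; subst hm2
    exact congrArg Prod.snd heq
  | succ N ih =>
    intro m1 m2 hN ρ1 ρ2 h1 h2 hs1 hs2 heq
    -- helper for the degenerate case: a walk cannot return to `a` with a forest
    have hbase : ∀ (m : ℕ) (σ1 σ2 : V → V), 1 ≤ m → σ1 ∈ SFset G Z →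
        (∀ s < m, (rotorWalk τ Z a σ2 s).1 ∉ Z) →
        rotorWalk τ Z a σ2 m = (a, σ1) → False := by
      intro m σ1 σ2 hm hσ1 hpre hend
      have haZ : a ∉ Z := by
        have := hpre 0 (by omega)
        exact this
      obtain ⟨j, hj1, hj⟩ := cprime (τ := τ) (Z := Z) (a := a) (ρ := σ2) m hm hpre
      rw [hend] at hj
      dsimp only at hj
      -- hj : σ1^[j] a = a
      obtain ⟨ℓ, hℓ⟩ := hσ1.2.1 a
      have hcy : σ1^[j * ℓ + 0] a = σ1^[0] a := it_cycle σ1 hj ℓ 0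
      simp only [Nat.add_zero, Function.iterate_zero_apply] at hcy
      have hfr := it_freeze σ1 Z hσ1.2.2 hℓ (j * ℓ - ℓ)
      have hle : ℓ ≤ j * ℓ := Nat.le_mul_of_pos_left ℓ (show 0 < j by omega)
      rw [show ℓ + (j * ℓ - ℓ) = j * ℓ by omega] at hfr
      rw [hcy] at hfr
      rw [hfr] at haZ
      exact haZ hℓ
    rcases Nat.eq_zero_or_pos m1 with hm1 | hm1
    · rcases Nat.eq_zero_or_pos m2 with hm2 | hm2
      · subst hm1; subst hm2
        exact congrArg Prod.snd heq
      · subst hm1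
        exact absurd (hbase m2 ρ1 ρ2 hm2 h1 hs2 heq.symm) not_false
    · rcases Nat.eq_zero_or_pos m2 with hm2 | hm2
      · subst hm2
        exact absurd (hbase m1 ρ2 ρ1 hm1 h2 hs1 heq) not_false
      · -- both walks took a genuine last step: reverse it
        obtain ⟨k1, rfl⟩ : ∃ k, m1 = k + 1 := ⟨m1 - 1, by omega⟩
        obtain ⟨k2, rfl⟩ : ∃ k, m2 = k + 1 := ⟨m2 - 1, by omega⟩
        have e1 := walk_succ τ Z a ρ1 k1
        have e2 := walk_succ τ Z a ρ2 k2
        rw [e1, e2] at heq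
        have hZ1 : (rotorWalk τ Z a ρ1 k1).1 ∉ Z := hs1 k1 (by omega)
        have hZ2 : (rotorWalk τ Z a ρ2 k2).1 ∉ Z := hs2 k2 (by omega)
        have hv1 := vstate_walk hτ (a := a) h1 k1
        have hv2 := vstate_walk hτ (a := a) h2 k2
        have hkey := step_inj hτ hZ1 hZ2
          (show VState G Z a ((rotorWalk τ Z a ρ1 k1).1, (rotorWalk τ Z a ρ1 k1).2) from hv1)
          (show VState G Z a ((rotorWalk τ Z a ρ2 k2).1, (rotorWalk τ Z a ρ2 k2).2) from hv2)
          (by simpa using heq)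
        have hstates : rotorWalk τ Z a ρ1 k1 = rotorWalk τ Z a ρ2 k2 := by
          have := hkey
          exact Prod.ext_iff.mpr ⟨this.1, this.2⟩
        exact ih k1 k2 (by omega) ρ1 ρ2 h1 h2 (fun s hs => hs1 s (by omega))
          (fun s hs => hs2 s (by omega)) hstates

private lemma eventualVal_eq {f : ℕ → V} {t0 : ℕ} (h : ∀ s, t0 ≤ s → f s = f t0) :
    eventualVal f = f t0 := by
  have hex : ∃ t : ℕ, ∀ s : ℕ, t ≤ s → f s = f t := ⟨t0, h⟩
  unfold eventualVal
  rw [dif_pos hex]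
  have h1 := hex.choose_spec (max t0 hex.choose) (le_max_right _ _)
  have h2 := h (max t0 hex.choose) (le_max_left _ _)
  rw [← h1, h2]

private lemma finalConfig_eq {τ : V → V → V} {Z : Set V} {a : V} {ρ : V → V} {T : ℕ}
    (hT : (rotorWalk τ Z a ρ T).1 ∈ Z) :
    finalConfig τ Z a ρ = (rotorWalk τ Z a ρ T).2 := by
  funext x
  have hconst : ∀ s, T ≤ s → (rotorWalk τ Z a ρ s).2 x = (rotorWalk τ Z a ρ T).2 x := by
    intro s hs
    obtain ⟨d, rfl⟩ := Nat.exists_eq_add_of_le hs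
    rw [walk_frozen hT d]
  exact eventualVal_eq hconst

private lemma SF_finite {G : SimpleGraph V} [∀ v : V, Fintype (G.neighborSet v)]
    {Z : Set V} (hfin : (Zᶜ : Set V).Finite) : (SFset G Z).Finite := by
  classical
  haveI : Finite ↥(Zᶜ : Set V) := hfin.to_subtype
  let F : ↥(SFset G Z) → (∀ v : ↥(Zᶜ : Set V), ↥(G.neighborSet v.1)) := fun ρ v =>
    ⟨ρ.1 v.1, (G.mem_neighborSet _ _).mpr (ρ.2.1 v.1 v.2)⟩
  have hF : Function.Injective F := by
    intro ρ1 ρ2 h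
    apply Subtype.ext
    funext v
    by_cases hv : v ∈ Z
    · rw [ρ1.2.2.2 v hv, ρ2.2.2.2 v hv]
    · exact congrArg Subtype.val (congrFun h ⟨v, hv⟩)
  haveI : Finite ↥(SFset G Z) := Finite.of_injective F hF
  exact Set.toFinite _

end RotorAux
/-- If `Z` is nonempty with `V ∖ Z` finite, then for any `i` and any
vertices `a_0, …, a_{i-1}`, the map `ρ ↦ ξ_i(a_0,…,a_{i-1},Z;ρ)` is a bijection
from `SF(Z)` to `SF(Z)`; consequently the uniform measure `OUSF(Z)` is preserved. -/
theorem stmt13 {V : Type u} [DecidableEq V] (G : SimpleGraph V) (hconn : G.Connected)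
    [∀ v : V, Fintype (G.neighborSet v)] (τ : V → V → V) (hτ : IsMechanism G τ)
    (Z : Set V) (hZ : Z.Nonempty) (hfin : (Zᶜ : Set V).Finite)
    (i : ℕ) (av : ℕ → V) :
    Set.BijOn (fun ρ => xiConfig τ Z av i ρ) (SFset G Z) (SFset G Z) := by
  have hSFfin : (SFset G Z).Finite := SF_finite hfin
  have hbij : ∀ b : V, Set.BijOn (finalConfig τ Z b) (SFset G Z) (SFset G Z) := by
    intro b
    have hterm : ∀ ρ ∈ SFset G Z, ∃ t : ℕ, (rotorWalk τ Z b ρ t).1 ∈ Z :=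
      fun ρ hρ => exists_hit (a := b) hconn hτ hZ hfin hρ
    have hmaps : Set.MapsTo (finalConfig τ Z b) (SFset G Z) (SFset G Z) := by
      intro ρ hρ
      have hTZ := Nat.find_spec (hterm ρ hρ)
      rw [finalConfig_eq hTZ]
      obtain ⟨w1, w2, w3, _⟩ := vstate_walk (a := b) hτ hρ (Nat.find (hterm ρ hρ))
      refine ⟨w1, ?_, w2⟩
      intro v
      obtain ⟨ℓ, hℓ⟩ := w3 v
      rcases hℓ with h | h
      · exact ⟨ℓ, h⟩
      · exact ⟨ℓ, h ▸ hTZ⟩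
    have hinjOn : Set.InjOn (finalConfig τ Z b) (SFset G Z) := by
      intro ρ1 h1 ρ2 h2 hfe
      set T1 := Nat.find (hterm ρ1 h1) with hT1def
      set T2 := Nat.find (hterm ρ2 h2) with hT2def
      have hT1Z : (rotorWalk τ Z b ρ1 T1).1 ∈ Z := Nat.find_spec (hterm ρ1 h1)
      have hT2Z : (rotorWalk τ Z b ρ2 T2).1 ∈ Z := Nat.find_spec (hterm ρ2 h2)
      have hT1min : ∀ s < T1, (rotorWalk τ Z b ρ1 s).1 ∉ Z :=
        fun s hs => Nat.find_min (hterm ρ1 h1) hs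
      have hT2min : ∀ s < T2, (rotorWalk τ Z b ρ2 s).1 ∉ Z :=
        fun s hs => Nat.find_min (hterm ρ2 h2) hs
      have hσ : (rotorWalk τ Z b ρ1 T1).2 = (rotorWalk τ Z b ρ2 T2).2 := by
        rw [← finalConfig_eq hT1Z, ← finalConfig_eq hT2Z, hfe]
      set σ := (rotorWalk τ Z b ρ1 T1).2 with hσdef
      obtain ⟨j1, hj1⟩ := (vstate_walk (a := b) hτ h1 T1).2.2.2
      obtain ⟨j2, hj2⟩ := (vstate_walk (a := b) hτ h2 T2).2.2.2
      rw [← hσ] at hj2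
      have hfixσ : ∀ v ∈ Z, σ v = v := (vstate_walk (a := b) hτ h1 T1).2.1
      have hm1 : σ^[j1] b ∈ Z := by rw [hj1]; exact hT1Z
      have hm2 : σ^[j2] b ∈ Z := by rw [hj2]; exact hT2Z
      have hfr1 := it_freeze σ Z hfixσ hm1 j2
      have hfr2 := it_freeze σ Z hfixσ hm2 j1
      have hz12 : (rotorWalk τ Z b ρ1 T1).1 = (rotorWalk τ Z b ρ2 T2).1 := by
        calc (rotorWalk τ Z b ρ1 T1).1 = σ^[j1] b := hj1.symm
          _ = σ^[j1 + j2] b := hfr1.symm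
          _ = σ^[j2 + j1] b := by rw [Nat.add_comm]
          _ = σ^[j2] b := hfr2
          _ = (rotorWalk τ Z b ρ2 T2).1 := hj2
      have hstate : rotorWalk τ Z b ρ1 T1 = rotorWalk τ Z b ρ2 T2 :=
        Prod.ext_iff.mpr ⟨hz12, hσ⟩
      exact walks_inj hτ (T1 + T2) T1 T2 le_rfl ρ1 ρ2 h1 h2 hT1min hT2min hstate
    exact (Set.Finite.injOn_iff_bijOn_of_mapsTo hSFfin hmaps).mp hinjOn
  induction i with
  | zero => exact Set.bijOn_id _
  | succ i ih =>
    have hco : (fun ρ => xiConfig τ Z av (i + 1) ρ) =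
        (finalConfig τ Z (av i)) ∘ (fun ρ => xiConfig τ Z av i ρ) := rfl
    rw [hco]
    exact (hbij (av i)).comp ih
end
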